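/- arXiv:2412.02376 — 3 statements merged into one kernel-verified Lean document; each statement's English description precedes it below -/
import Mathlib

section
/- Define g₃(x) = log₂(e) − (2/x)·log₂(e)·arctan(x) + (1/x²)·log₂(1+x²) for x > 0. Then g₃ is monotonically increasing on (0, ∞). -/
open Real

noncomputable def g₃ (x : ℝ) : ℝ :=
  Real.logb 2 (Real.exp 1) - (2/x) * Real.logb 2 (Real.exp 1) * Real.arctan x
    + (1/x^2) * Real.logb 2 (1 + x^2)

lemma aux_hasDerivAt_sq (x : ℝ) : HasDerivAt (fun x : ℝ => 1 + x ^ 2) (2 * x) x := by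
  simpa using ((hasDerivAt_pow 2 x).const_add 1)

lemma aux_hasDerivAt_p (x : ℝ) :
    HasDerivAt (fun x : ℝ => arctan x - x / (1 + x ^ 2))
      (2 * x ^ 2 / (1 + x ^ 2) ^ 2) x := by
  have h0 : (1 + x ^ 2) ≠ 0 := by positivity
  have h2 : HasDerivAt (fun x : ℝ => x / (1 + x ^ 2))
      ((1 * (1 + x ^ 2) - x * (2 * x)) / (1 + x ^ 2) ^ 2) x :=
    (hasDerivAt_id x).div (aux_hasDerivAt_sq x) h0
  have h := (Real.hasDerivAt_arctan x).sub h2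
  refine h.congr_deriv ?_
  field_simp
  ring

lemma aux_p_pos {x : ℝ} (hx : 0 < x) : 0 < arctan x - x / (1 + x ^ 2) := by
  have hmono : StrictMonoOn (fun x : ℝ => arctan x - x / (1 + x ^ 2)) (Set.Ici 0) := by
    apply strictMonoOn_of_deriv_pos (convex_Ici 0)
    · exact fun y _ => ((aux_hasDerivAt_p y).continuousAt).continuousWithinAt
    · intro y hy
      rw [interior_Ici] at hy
      rw [(aux_hasDerivAt_p y).deriv]
      have hy' : (0:ℝ) < y := hy
      positivity
  have := hmono Set.self_mem_Ici (Set.mem_Ici.2 hx.le) hx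
  simpa using this

lemma aux_hasDerivAt_q (x : ℝ) :
    HasDerivAt (fun x : ℝ => x * arctan x - Real.log (1 + x ^ 2))
      (arctan x - x / (1 + x ^ 2)) x := by
  have h0 : (1 + x ^ 2) ≠ 0 := by positivity
  have h2 : HasDerivAt (fun x : ℝ => Real.log (1 + x ^ 2)) ((1 + x ^ 2)⁻¹ * (2 * x)) x :=
    (Real.hasDerivAt_log h0).comp (h := fun x : ℝ => 1 + x ^ 2) x (aux_hasDerivAt_sq x)
  have h3 : HasDerivAt (fun x : ℝ => x * arctan x)
      (1 * arctan x + x * (1 / (1 + x ^ 2))) x :=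
    (hasDerivAt_id x).mul (Real.hasDerivAt_arctan x)
  have h := h3.sub h2
  refine h.congr_deriv ?_
  field_simp
  ring

lemma aux_q_pos {x : ℝ} (hx : 0 < x) : 0 < x * arctan x - Real.log (1 + x ^ 2) := by
  have hmono : StrictMonoOn (fun x : ℝ => x * arctan x - Real.log (1 + x ^ 2)) (Set.Ici 0) := by
    apply strictMonoOn_of_deriv_pos (convex_Ici 0)
    · exact fun y _ => ((aux_hasDerivAt_q y).continuousAt).continuousWithinAt
    · intro y hy
      rw [interior_Ici] at hy
      rw [(aux_hasDerivAt_q y).deriv]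
      exact aux_p_pos hy
  have := hmono Set.self_mem_Ici (Set.mem_Ici.2 hx.le) hx
  simpa using this

lemma aux_hasDerivAt_f {x : ℝ} (hx : x ≠ 0) :
    HasDerivAt (fun x : ℝ => 1 - 2 * arctan x / x + Real.log (1 + x ^ 2) / x ^ 2)
      (2 / x ^ 3 * (x * arctan x - Real.log (1 + x ^ 2))) x := by
  have h0 : (1 + x ^ 2) ≠ 0 := by positivity
  have h1 : HasDerivAt (fun x : ℝ => 2 * arctan x / x)
      ((2 * (1 / (1 + x ^ 2)) * x - 2 * arctan x * 1) / x ^ 2) x :=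
    ((Real.hasDerivAt_arctan x).const_mul 2).div (hasDerivAt_id x) hx
  have h2 : HasDerivAt (fun x : ℝ => Real.log (1 + x ^ 2)) ((1 + x ^ 2)⁻¹ * (2 * x)) x :=
    (Real.hasDerivAt_log h0).comp (h := fun x : ℝ => 1 + x ^ 2) x (aux_hasDerivAt_sq x)
  have hx2 : (x : ℝ) ^ 2 ≠ 0 := pow_ne_zero 2 hx
  have h3 : HasDerivAt (fun x : ℝ => Real.log (1 + x ^ 2) / x ^ 2)
      (((1 + x ^ 2)⁻¹ * (2 * x) * x ^ 2 - Real.log (1 + x ^ 2) * (2 * x)) / (x ^ 2) ^ 2) x := by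
    have hsq : HasDerivAt (fun x : ℝ => x ^ 2) (2 * x) x := by
      simpa using hasDerivAt_pow 2 x
    exact h2.div hsq hx2
  have h := (h1.const_sub 1).add h3
  refine h.congr_deriv ?_
  field_simp
  ring

lemma aux_f_mono : StrictMonoOn
    (fun x : ℝ => 1 - 2 * arctan x / x + Real.log (1 + x ^ 2) / x ^ 2) (Set.Ioi 0) := by
  apply strictMonoOn_of_deriv_pos (convex_Ioi 0)
  · exact fun y hy =>
      ((aux_hasDerivAt_f (ne_of_gt hy)).continuousAt).continuousWithinAt
  · intro y hy
    rw [interior_Ioi] at hy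
    rw [(aux_hasDerivAt_f (ne_of_gt hy)).deriv]
    have hy' : (0:ℝ) < y := hy
    exact mul_pos (by positivity) (aux_q_pos hy')

theorem stmt_3 : StrictMonoOn g₃ (Set.Ioi (0:ℝ)) := by
  have hge : ∀ x : ℝ, g₃ x =
      (Real.log 2)⁻¹ * (1 - 2 * arctan x / x + Real.log (1 + x ^ 2) / x ^ 2) := by
    intro x
    simp only [g₃, Real.logb, Real.log_exp]
    ring
  have hc : (0:ℝ) < (Real.log 2)⁻¹ := by
    have := Real.log_pos (by norm_num : (1:ℝ) < 2)
    positivity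
  intro a ha b hb hab
  rw [hge a, hge b]
  exact mul_lt_mul_of_pos_left (aux_f_mono ha hb hab) hc
end

section
/- Define g₃(x) = log₂(e) − (2/x)·log₂(e)·arctan(x) + (1/x²)·log₂(1+x²) for x > 0. Then g₃(x) ≥ 0 for all x > 0, and lim_{x→0⁺} g₃(x) = 0. -/
open Real Filter

lemma arctan_le_self' {x : ℝ} (hx : 0 ≤ x) : Real.arctan x ≤ x := by
  rcases hx.eq_or_lt with rfl | hx
  · simp
  · have h1 : 0 < Real.arctan x := by
      have := Real.arctan_strictMono hx
      simpa using this
    have h2 : Real.arctan x < π / 2 := Real.arctan_lt_pi_div_two x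
    have := Real.lt_tan h1 h2
    rw [Real.tan_arctan] at this
    exact this.le

lemma hderiv_f (y : ℝ) :
    HasDerivAt (fun y : ℝ => y^2 - 2*y*Real.arctan y + Real.log (1+y^2))
      (2*y - 2*Real.arctan y) y := by
  have hpos : (0:ℝ) < 1 + y^2 := by positivity
  have h1 : HasDerivAt (fun y : ℝ => y^2) (2*y) y := by
    simpa using hasDerivAt_pow 2 y
  have h2 : HasDerivAt (fun y : ℝ => 2*y*Real.arctan y)
      (2 * Real.arctan y + (2*y) * (1/(1+y^2))) y := by
    have h := ((hasDerivAt_id y).const_mul 2).mul (Real.hasDerivAt_arctan y)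
    refine h.congr_deriv ?_; simp
  have h3 : HasDerivAt (fun y : ℝ => Real.log (1+y^2)) ((2*y) / (1+y^2)) y := by
    have : HasDerivAt (fun y : ℝ => 1 + y^2) (2*y) y := by
      simpa using (h1.const_add 1)
    exact this.log (ne_of_gt hpos)
  have := (h1.sub h2).add h3
  refine this.congr_deriv ?_
  field_simp
  ring

lemma key {x : ℝ} (hx : 0 ≤ x) :
    0 ≤ x^2 - 2*x*Real.arctan x + Real.log (1+x^2) := by
  set f : ℝ → ℝ := fun y => y^2 - 2*y*Real.arctan y + Real.log (1+y^2) with hf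
  have hdiff : Differentiable ℝ f := fun y => (hderiv_f y).differentiableAt
  have mono : MonotoneOn f (Set.Ici 0) := by
    apply monotoneOn_of_deriv_nonneg (convex_Ici 0) hdiff.continuous.continuousOn
      (fun y _ => (hdiff y).differentiableWithinAt)
    intro y hy
    rw [interior_Ici] at hy
    rw [(hderiv_f y).deriv]
    have := arctan_le_self' (le_of_lt hy)
    linarith
  have h0 : f 0 = 0 := by simp [hf]
  have := mono (Set.self_mem_Ici) (Set.mem_Ici.mpr hx) hx
  rw [h0] at this
  exact this

lemma log2_pos : (0:ℝ) < Real.log 2 := Real.log_pos (by norm_num)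

theorem stmt_4 :
    (∀ x : ℝ, 0 < x → 0 ≤ g₃ x) ∧
    Filter.Tendsto g₃ (nhdsWithin 0 (Set.Ioi 0)) (nhds 0) := by
  constructor
  · intro x hx
    have hx2 : x ≠ 0 := ne_of_gt hx
    have hlog2 := log2_pos
    have heq : g₃ x = (x^2 - 2*x*Real.arctan x + Real.log (1+x^2)) / (x^2 * Real.log 2) := by
      unfold g₃
      rw [Real.logb, Real.logb, Real.log_exp]
      field_simp
    rw [heq]
    exact div_nonneg (key hx.le) (by positivity)
  · -- limit
    have h1 : Tendsto (fun x : ℝ => Real.arctan x / x) (nhdsWithin 0 {0}ᶜ) (nhds 1) := by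
      have hd : HasDerivAt Real.arctan 1 0 := by
        simpa using Real.hasDerivAt_arctan 0
      have := hasDerivAt_iff_tendsto_slope.mp hd
      refine this.congr (fun y => ?_)
      simp [slope_def_field, div_eq_mul_inv]
    have h2 : Tendsto (fun t : ℝ => Real.log (1+t) / t) (nhdsWithin 0 {0}ᶜ) (nhds 1) := by
      have hd : HasDerivAt (fun t : ℝ => Real.log (1+t)) 1 0 := by
        have h := ((hasDerivAt_id (0:ℝ)).const_add 1).log (by norm_num)
        simpa using h
      have := hasDerivAt_iff_tendsto_slope.mp hd
      refine this.congr (fun y => ?_)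
      simp [slope_def_field, div_eq_mul_inv]
    have hsq : Tendsto (fun x : ℝ => x^2) (nhdsWithin 0 (Set.Ioi 0)) (nhdsWithin 0 {0}ᶜ) := by
      apply tendsto_nhdsWithin_of_tendsto_nhds_of_eventually_within
      · have : Tendsto (fun x : ℝ => x^2) (nhds 0) (nhds 0) := by
          simpa using (continuous_pow 2).tendsto (0:ℝ)
        exact this.mono_left nhdsWithin_le_nhds
      · filter_upwards [self_mem_nhdsWithin] with x hx
        have : (0:ℝ) < x := hx
        simp [Set.mem_compl_iff]
        positivity
    have h1' : Tendsto (fun x : ℝ => Real.arctan x / x) (nhdsWithin 0 (Set.Ioi 0)) (nhds 1) :=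
      h1.mono_left (nhdsWithin_mono _ (fun y hy => ne_of_gt hy))
    have h2' : Tendsto (fun x : ℝ => Real.log (1+x^2) / x^2) (nhdsWithin 0 (Set.Ioi 0)) (nhds 1) :=
      h2.comp hsq
    have hmain : Tendsto (fun x : ℝ => 1/Real.log 2 - 1/Real.log 2 * (2 * (Real.arctan x / x)) + 1/Real.log 2 * (Real.log (1+x^2) / x^2))
        (nhdsWithin 0 (Set.Ioi 0)) (nhds (1/Real.log 2 - 1/Real.log 2 * (2 * 1) + 1/Real.log 2 * 1)) := by
      exact (tendsto_const_nhds.sub ((tendsto_const_nhds.mul (tendsto_const_nhds.mul h1')))).add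
        (tendsto_const_nhds.mul h2')
    have hzero : 1/Real.log 2 - 1/Real.log 2 * (2 * 1) + 1/Real.log 2 * 1 = 0 := by ring
    rw [hzero] at hmain
    refine hmain.congr' ?_
    filter_upwards [self_mem_nhdsWithin] with x hx
    have hx2 : x ≠ 0 := ne_of_gt hx
    have hlog2 : Real.log 2 ≠ 0 := ne_of_gt log2_pos
    unfold g₃
    rw [Real.logb, Real.logb, Real.log_exp]
    field_simp
end

section
/- Let r₁ > r₂ > 0 and ρ > 0. Define R_NOMA(ρ) = −log₂ α₂ + log₂(1 + ρ·α₂/(2r₂²)) with α₂ ∈ (0,1), and R_OMA(ρ) = (1/2)·log₂(1 + 4ρ/r₂²) + (1/2)·log₂(1 + 4ρ/r₁²). Then lim_{ρ→∞} (R_NOMA(ρ) − R_OMA(ρ)) = log₂(r₁/r₂) − 3. In particular the limit is positive whenever r₁ > 8·r₂. -/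
open Real Filter

theorem stmt_14 (r₁ r₂ α₂ : ℝ) (h12 : r₂ < r₁) (h2 : 0 < r₂) (hα : α₂ ∈ Set.Ioo (0:ℝ) 1) :
    Filter.Tendsto
      (fun ρ : ℝ =>
        (- Real.logb 2 α₂ + Real.logb 2 (1 + ρ * α₂ / (2 * r₂^2)))
          - ((1/2) * Real.logb 2 (1 + 4*ρ/r₂^2) + (1/2) * Real.logb 2 (1 + 4*ρ/r₁^2)))
      Filter.atTop (nhds (Real.logb 2 (r₁/r₂) - 3)) ∧
    (8 * r₂ < r₁ → 0 < Real.logb 2 (r₁/r₂) - 3) := by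
  obtain ⟨hα0, hα1⟩ := hα
  have h1 : 0 < r₁ := h2.trans h12
  have h3 : Real.logb 2 (8:ℝ) = 3 := by
    rw [show (8:ℝ) = 2 ^ (3:ℕ) by norm_num, Real.logb_pow,
      Real.logb_self_eq_one (by norm_num)]
    norm_num
  set a := α₂ / (2 * r₂ ^ 2) with ha
  set b := 4 / r₂ ^ 2 with hb
  set c := 4 / r₁ ^ 2 with hc
  have hapos : 0 < a := by positivity
  have hbpos : 0 < b := by positivity
  have hcpos : 0 < c := by positivity
  constructor
  · set g : ℝ → ℝ := fun x =>
      (- Real.logb 2 α₂ + Real.logb 2 (x + a))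
        - ((1/2) * Real.logb 2 (x + b) + (1/2) * Real.logb 2 (x + c)) with hg
    have hcA : ∀ d : ℝ, 0 < d → ContinuousAt (fun x : ℝ => Real.logb 2 (x + d)) 0 := by
      intro d hd
      exact (Real.continuousAt_logb (by simpa using hd.ne')).comp
        (continuousAt_id.add continuousAt_const)
    have hcont : ContinuousAt g 0 := by
      exact ((continuousAt_const.add (hcA a hapos)).sub
        ((continuousAt_const.mul (hcA b hbpos)).add (continuousAt_const.mul (hcA c hcpos))))
    have ht : Tendsto (fun ρ : ℝ => g ρ⁻¹) atTop (nhds (g 0)) :=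
      hcont.tendsto.comp tendsto_inv_atTop_zero
    have hkey : g 0 = Real.logb 2 (r₁/r₂) - 3 := by
      simp only [hg, zero_add, ha, hb, hc]
      rw [Real.logb_div hα0.ne' (by positivity), Real.logb_div (by norm_num) (by positivity),
        Real.logb_div (by norm_num) (by positivity), Real.logb_div h1.ne' h2.ne',
        Real.logb_mul (by norm_num) (by positivity),
        show (4:ℝ) = 2 ^ (2:ℕ) by norm_num, show r₁ ^ 2 = r₁ ^ (2:ℕ) by norm_num,
        show r₂ ^ 2 = r₂ ^ (2:ℕ) by norm_num,
        Real.logb_pow, Real.logb_pow, Real.logb_pow,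
        Real.logb_self_eq_one (by norm_num)]
      push_cast
      ring
    rw [← hkey]
    refine ht.congr' ?_
    filter_upwards [eventually_ge_atTop (1:ℝ)] with ρ hρ
    have hρ0 : (0:ℝ) < ρ := lt_of_lt_of_le one_pos hρ
    have e1 : 1 + ρ * α₂ / (2 * r₂ ^ 2) = ρ * (ρ⁻¹ + a) := by
      rw [ha, mul_add, mul_inv_cancel₀ hρ0.ne']; ring
    have e2 : 1 + 4 * ρ / r₂ ^ 2 = ρ * (ρ⁻¹ + b) := by
      rw [hb, mul_add, mul_inv_cancel₀ hρ0.ne']; ring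
    have e3 : 1 + 4 * ρ / r₁ ^ 2 = ρ * (ρ⁻¹ + c) := by
      rw [hc, mul_add, mul_inv_cancel₀ hρ0.ne']; ring
    have hia : (0:ℝ) < ρ⁻¹ + a := by positivity
    have hib : (0:ℝ) < ρ⁻¹ + b := by positivity
    have hic : (0:ℝ) < ρ⁻¹ + c := by positivity
    simp only [hg]
    rw [e1, e2, e3, Real.logb_mul hρ0.ne' hia.ne', Real.logb_mul hρ0.ne' hib.ne',
      Real.logb_mul hρ0.ne' hic.ne']
    ring
  · intro h8
    have h8' : (8:ℝ) < r₁ / r₂ := (lt_div_iff₀ h2).mpr (by linarith)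
    have := Real.logb_lt_logb (b := 2) one_lt_two (by norm_num : (0:ℝ) < 8) h8'
    rw [h3] at this
    linarith
end
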